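/- Let μ be a finite nonzero Borel measure on E = EuclideanSpace ℝ (Fin d) with finite second moment, i.e. ∫ ‖q‖² dμ(q) < ∞. Let M = μ(E) > 0 and let C = M⁻¹ · ∫ q dμ(q) be the centroid of μ. Then the function J(p) = ∫ ‖q − p‖² dμ(q) is differentiable at every p ∈ E with gradient ∇J(p) = 2M·(p − C). In particular ∇J(p) = 0 if and only if p = C, i.e. the centroid is the unique critical point of the polar moment of inertia. -/

import Mathlib

open MeasureTheory

open RealInnerProductSpace in
/-- For a finite nonzero measure `μ` on Euclidean space with finite second
moment, the polar moment of inertia `J(p) = ∫ ‖q − p‖² dμ` has gradient `2M(p − C)` at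
every `p`, where `M = μ(E)` and `C` is the centroid; its unique critical point is `C`. -/
theorem polar_moment_gradient
    {d : ℕ} (μ : Measure (EuclideanSpace ℝ (Fin d)))
    [IsFiniteMeasure μ] (hμ : μ ≠ 0)
    (h2 : Integrable (fun q => ‖q‖ ^ 2) μ)
    (M : ℝ) (hM : M = (μ Set.univ).toReal)
    (C : EuclideanSpace ℝ (Fin d)) (hC : C = M⁻¹ • ∫ q, q ∂μ)
    (p : EuclideanSpace ℝ (Fin d)) :
    HasGradientAt (fun p : EuclideanSpace ℝ (Fin d) => ∫ q, ‖q - p‖ ^ 2 ∂μ)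
      ((2 * M) • (p - C)) p ∧ ((2 * M) • (p - C) = 0 ↔ p = C) := by
  have hMpos : 0 < M := by
    rw [hM]
    refine ENNReal.toReal_pos ?_ (measure_ne_top μ _)
    simpa [Measure.measure_univ_eq_zero] using hμ
  -- integrability of the identity
  have hq : Integrable (fun q : EuclideanSpace ℝ (Fin d) => q) μ := by
    refine Integrable.mono' (h2.add (integrable_const 1)) aestronglyMeasurable_id ?_
    filter_upwards with q
    have := norm_nonneg q
    simp only [Pi.add_apply]
    nlinarith
  set I : EuclideanSpace ℝ (Fin d) := ∫ q, q ∂μ with hI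
  have hIC : I = M • C := by
    rw [hC, smul_smul, mul_inv_cancel₀ hMpos.ne', one_smul]
  -- rewrite J as an explicit quadratic function
  have key : (fun p' : EuclideanSpace ℝ (Fin d) => ∫ q, ‖q - p'‖ ^ 2 ∂μ)
      = fun p' => (∫ q, ‖q‖ ^ 2 ∂μ) - 2 * ⟪I, p'⟫ + M * ‖p'‖ ^ 2 := by
    funext p'
    have h3 : Integrable (fun q : EuclideanSpace ℝ (Fin d) => ⟪q, p'⟫) μ :=
      hq.inner_const p'
    have hin : ∫ q, ⟪q, p'⟫ ∂μ = ⟪I, p'⟫ := by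
      calc ∫ q, ⟪q, p'⟫ ∂μ = ∫ q, ⟪p', q⟫ ∂μ := by
            congr 1; funext q; exact real_inner_comm p' q
        _ = ⟪p', I⟫ := integral_inner hq p'
        _ = ⟪I, p'⟫ := real_inner_comm I p'
    have hfi : Integrable (fun q : EuclideanSpace ℝ (Fin d) => ‖q‖ ^ 2 - 2 * ⟪q, p'⟫) μ :=
      h2.sub (h3.const_mul 2)
    calc ∫ q, ‖q - p'‖ ^ 2 ∂μ
        = ∫ q, (‖q‖ ^ 2 - 2 * ⟪q, p'⟫ + ‖p'‖ ^ 2) ∂μ := by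
          congr 1; funext q; exact norm_sub_sq_real q p'
      _ = (∫ q, ‖q‖ ^ 2 ∂μ) - 2 * ⟪I, p'⟫ + M * ‖p'‖ ^ 2 := by
          rw [integral_add hfi (integrable_const _),
            integral_sub h2 (h3.const_mul 2), MeasureTheory.integral_const_mul, hin, integral_const,
            hM, smul_eq_mul, Measure.real]
  constructor
  · rw [key, hasGradientAt_iff_hasFDerivAt]
    have hA : HasFDerivAt (fun _ : EuclideanSpace ℝ (Fin d) => ∫ q, ‖q‖ ^ 2 ∂μ)
        (0 : EuclideanSpace ℝ (Fin d) →L[ℝ] ℝ) p := hasFDerivAt_const _ _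
    have hinner : HasFDerivAt (fun p' : EuclideanSpace ℝ (Fin d) => ⟪I, p'⟫)
        (innerSL ℝ I) p := (innerSL ℝ I).hasFDerivAt
    have hnorm : HasFDerivAt (fun p' : EuclideanSpace ℝ (Fin d) => ‖p'‖ ^ 2)
        (2 • innerSL ℝ p) p := by
      simpa using (hasFDerivAt_id p).norm_sq
    have := (hA.sub (hinner.const_mul 2)).add (hnorm.const_mul M)
    refine this.congr_fderiv ?_
    ext y
    simp only [ContinuousLinearMap.add_apply, ContinuousLinearMap.sub_apply,
      ContinuousLinearMap.smul_apply, ContinuousLinearMap.zero_apply, innerSL_apply_apply,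
      InnerProductSpace.toDual_apply_apply, smul_eq_mul, hIC,
      real_inner_smul_left, inner_sub_left]
    ring
  · rw [smul_eq_zero, sub_eq_zero]
    constructor
    · rintro (h | h)
      · exact absurd h (by positivity)
      · exact h
    · exact fun h => Or.inr h
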